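/- arXiv:2303.15717 — 3 statements merged into one kernel-verified Lean document; each statement's English description precedes it below -/
import Mathlib

section
/- Let X be a complex Banach space and L(X) the Banach algebra of bounded linear operators on X. Let M = [[A, B], [C, D]] ∈ M₂(L(X)) and suppose A and D have Hirano inverses A^H and D^H. If B D^H = 0, A^π B C = 0, A^H B C = 0 and (D·D^π − C A^H B)·C = 0, where A^π = I − A·A^H and D^π = I − D·D^H, then M has a Hirano inverse in M₂(L(X)). -/
/-- `a` has a Hirano inverse: there exists `z` with `az = za`, `z = zaz`,
and `a^2 - az` nilpotent. -/
def HasHiranoInverse {R : Type*} [Ring R] (a : R) : Prop :=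
  ∃ z : R, a * z = z * a ∧ z = z * a * z ∧ IsNilpotent (a ^ 2 - a * z)

/-- `a` has a strongly Drazin inverse: there exists `z` with `az = za`, `z = zaz`,
and `a - az` nilpotent. -/
def HasStronglyDrazinInverse {R : Type*} [Ring R] (a : R) : Prop :=
  ∃ z : R, a * z = z * a ∧ z = z * a * z ∧ IsNilpotent (a - a * z)

section GeneralRing

variable {R : Type*} [Ring R]

private lemma my_expand_pow (t u : R) (hu : ∀ j, u * (t ^ j * u) = 0) :
    ∀ n : ℕ, (t + u) ^ (n + 1) =
      t ^ (n + 1) + ∑ i ∈ Finset.range (n + 1), t ^ i * u * t ^ (n - i) := by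
  intro n
  induction n with
  | zero => simp
  | succ n ih =>
    have h1 : (t + u) ^ (n + 2) = (t + u) ^ (n + 1) * (t + u) := by rw [← pow_succ]
    rw [h1, ih, add_mul, mul_add, mul_add, Finset.sum_mul, Finset.sum_mul]
    have hSu : ∑ i ∈ Finset.range (n + 1), t ^ i * u * t ^ (n - i) * u = 0 := by
      refine Finset.sum_eq_zero fun i _ => ?_
      rw [mul_assoc (t ^ i * u), mul_assoc (t ^ i), hu, mul_zero]
    have hSt : ∑ i ∈ Finset.range (n + 1), t ^ i * u * t ^ (n - i) * t
        = ∑ i ∈ Finset.range (n + 1), t ^ i * u * t ^ (n + 1 - i) := by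
      refine Finset.sum_congr rfl fun i hi => ?_
      have hle : i ≤ n := Nat.lt_succ_iff.mp (Finset.mem_range.mp hi)
      rw [mul_assoc, ← pow_succ, Nat.succ_sub hle]
    rw [hSu, hSt, add_zero, ← pow_succ]
    conv_rhs => rw [Finset.sum_range_succ]
    rw [Nat.sub_self, pow_zero, mul_one]
    abel

private lemma my_isNilpotent_add (t u : R) (ht : IsNilpotent t)
    (hu : ∀ j, u * (t ^ j * u) = 0) : IsNilpotent (t + u) := by
  obtain ⟨a, ha⟩ := ht
  have hta : ∀ i, a ≤ i → t ^ i = 0 := fun i hi => by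
    rw [← Nat.sub_add_cancel hi, pow_add, ha, mul_zero]
  refine ⟨2 * a + 1, ?_⟩
  rw [my_expand_pow t u hu (2 * a), hta _ (by omega), zero_add]
  refine Finset.sum_eq_zero fun i hi => ?_
  have hi' : i < 2 * a + 1 := Finset.mem_range.mp hi
  rcases le_or_gt a i with h | h
  · rw [hta i h, zero_mul, zero_mul]
  · have : a ≤ 2 * a - i := by omega
    rw [hta _ this, mul_zero]

private lemma my_commute_aeval (x : R) (p : Polynomial ℤ) : Commute x (Polynomial.aeval x p) := by
  induction p using Polynomial.induction_on' with
  | add p q hp hq => rw [map_add]; exact hp.add_right hq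
  | monomial n a =>
    rw [Polynomial.aeval_monomial]
    exact ((Int.cast_commute a x).symm.mul_right ((Commute.refl x).pow_right n))

private lemma my_exists_idempotent (x : R) (h : IsNilpotent (x - x ^ 2)) :
    ∃ e : R, IsIdempotentElem e ∧ IsNilpotent (e - x) ∧ ∀ z : R, Commute x z → Commute e z := by
  obtain ⟨m, hm⟩ := h
  have hmn : (x - x ^ 2) ^ (m + 1) = 0 := by rw [pow_succ, hm, zero_mul]
  set n := m + 1 with hn
  refine ⟨1 - (1 - x ^ n) ^ n, isIdempotentElem_one_sub_one_sub_pow_pow x n hmn, ?_, ?_⟩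
  · have hX : (Polynomial.X : Polynomial ℤ) ∣ (1 - (1 - Polynomial.X ^ n) ^ n) - Polynomial.X := by
      refine dvd_sub ?_ dvd_rfl
      have h1 : (Polynomial.X : Polynomial ℤ) ^ n ∣ 1 - (1 - Polynomial.X ^ n) ^ n := by
        have h0 := sub_dvd_pow_sub_pow (1 : Polynomial ℤ) (1 - Polynomial.X ^ n) n
        rwa [sub_sub_cancel, one_pow] at h0
      exact (dvd_pow_self _ (by omega : n ≠ 0)).trans h1
    have hX1 : ((1 : Polynomial ℤ) - Polynomial.X) ∣
        (1 - (1 - Polynomial.X ^ n) ^ n) - Polynomial.X := by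
      have h1 : ((1 : Polynomial ℤ) - Polynomial.X) ∣ 1 - Polynomial.X ^ n := by
        simpa using sub_dvd_pow_sub_pow (1 : Polynomial ℤ) Polynomial.X n
      have h2 : ((1 : Polynomial ℤ) - Polynomial.X) ∣ ((1 : Polynomial ℤ) - Polynomial.X ^ n) ^ n :=
        h1.trans (dvd_pow_self _ (by omega : n ≠ 0))
      have h3 : (1 - (1 - Polynomial.X ^ n) ^ n) - Polynomial.X
          = ((1 : Polynomial ℤ) - Polynomial.X) - (1 - Polynomial.X ^ n) ^ n := by ring
      rw [h3]; exact dvd_sub dvd_rfl h2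
    have hcop : IsCoprime (Polynomial.X : Polynomial ℤ) (1 - Polynomial.X) := ⟨1, 1, by ring⟩
    have hdvd := hcop.mul_dvd hX hX1
    have hxx : (Polynomial.X : Polynomial ℤ) * (1 - Polynomial.X)
        = Polynomial.X - Polynomial.X ^ 2 := by ring
    rw [hxx] at hdvd
    obtain ⟨g, hg⟩ := hdvd
    have hval := congrArg (Polynomial.aeval x) hg
    simp only [map_sub, map_mul, map_one, map_pow, Polynomial.aeval_X] at hval
    rw [hval]
    have hc : Commute (x - x ^ 2) (Polynomial.aeval x g) :=
      (my_commute_aeval x g).sub_left ((my_commute_aeval x g).pow_left 2)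
    exact hc.isNilpotent_mul_right ⟨m, hm⟩
  · intro z hz
    exact ((Commute.one_left z).sub_left (((Commute.one_left z).sub_left (hz.pow_left n)).pow_left n))

private lemma my_hasHiranoInverse_of (a : R) (h : IsNilpotent (a - a ^ 3)) :
    HasHiranoInverse a := by
  have hb : IsNilpotent (a ^ 2 - (a ^ 2) ^ 2) := by
    have h1 : a ^ 2 - (a ^ 2) ^ 2 = a * (a - a ^ 3) := by noncomm_ring
    rw [h1]
    exact ((Commute.refl a).sub_right ((Commute.refl a).pow_right 3)).isNilpotent_mul_left h
  obtain ⟨e, he, hne, hce⟩ := my_exists_idempotent (a ^ 2) hb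
  have hca : Commute e a := hce a ((Commute.refl a).pow_left 2)
  have hcea : Commute e (a ^ 2) := hca.pow_right 2
  have hc1 : Commute (1 - a ^ 2) e := (Commute.one_left e).sub_left hcea.symm
  obtain ⟨k, hk⟩ := hne
  have hkey : (1 - a ^ 2) * e = (e - a ^ 2) * e := by
    rw [sub_mul, sub_mul, one_mul, he.eq]
  have h0 : (1 - a ^ 2) ^ (k + 1) * e = 0 := by
    have hc2 : Commute (e - a ^ 2) e := (Commute.refl e).sub_left hcea.symm
    have e1 : ((1 - a ^ 2) * e) ^ (k + 1) = (1 - a ^ 2) ^ (k + 1) * e ^ (k + 1) :=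
      hc1.mul_pow (k + 1)
    have e2 : ((e - a ^ 2) * e) ^ (k + 1) = (e - a ^ 2) ^ (k + 1) * e ^ (k + 1) :=
      hc2.mul_pow (k + 1)
    have e3 : (e : R) ^ (k + 1) = e := he.pow_succ_eq k
    have e4 : (e - a ^ 2) ^ (k + 1) = 0 := by rw [pow_succ, hk, zero_mul]
    calc (1 - a ^ 2) ^ (k + 1) * e = ((1 - a ^ 2) * e) ^ (k + 1) := by rw [e1, e3]
      _ = ((e - a ^ 2) * e) ^ (k + 1) := by rw [hkey]
      _ = 0 := by rw [e2, e4, zero_mul]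
  set w : R := ∑ i ∈ Finset.range (k + 1), (1 - a ^ 2) ^ i * e with hw_def
  have hw : a ^ 2 * w = e := by
    rw [hw_def, Finset.mul_sum]
    have hterm : ∀ i, a ^ 2 * ((1 - a ^ 2) ^ i * e)
        = (1 - a ^ 2) ^ i * e - (1 - a ^ 2) ^ (i + 1) * e := by
      intro i
      have : a ^ 2 * ((1 - a ^ 2) ^ i * e) = (1 - (1 - a ^ 2)) * ((1 - a ^ 2) ^ i * e) := by
        norm_num
      rw [this, sub_mul, one_mul, ← mul_assoc, ← pow_succ']
    rw [Finset.sum_congr rfl fun i _ => hterm i, Finset.sum_range_sub', pow_zero, one_mul, h0,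
      sub_zero]
  have hcaw : Commute a w := by
    rw [hw_def]
    refine Commute.sum_right _ _ _ fun i _ => ?_
    exact (((Commute.one_right a).sub_right ((Commute.refl a).pow_right 2)).pow_right i).mul_right
      hca.symm
  have hew : e * w = w := by
    rw [hw_def, Finset.mul_sum]
    refine Finset.sum_congr rfl fun i _ => ?_
    rw [← mul_assoc, ← (hc1.pow_left i).eq, mul_assoc, he.eq]
  have haz : a * (a * w) = e := by rw [← mul_assoc, ← sq, hw]
  have hza : a * w * a = e := by rw [mul_assoc, ← hcaw.eq, ← mul_assoc, ← sq, hw]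
  refine ⟨a * w, by rw [haz, hza], ?_, ?_⟩
  · rw [hza, ← mul_assoc, hca.eq, mul_assoc, hew]
  · rw [haz, ← neg_sub]
    exact IsNilpotent.neg ⟨k, hk⟩

private lemma my_isNilpotent_sub_cube (a z : R) (h1 : a * z = z * a) (h2 : z = z * a * z)
    (h3 : IsNilpotent (a ^ 2 - a * z)) : IsNilpotent (a - a ^ 3) := by
  obtain ⟨k, hk⟩ := h3
  have hca : Commute a (a * z) := by
    unfold Commute SemiconjBy
    rw [mul_assoc a z a, ← h1]
  have hidem : IsIdempotentElem (a * z) := by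
    unfold IsIdempotentElem
    calc a * z * (a * z) = a * (z * a * z) := by
          rw [← mul_assoc, mul_assoc a z a, mul_assoc a (z * a) z]
      _ = a * z := by rw [← h2]
  have hcn : Commute a (a ^ 2 - a * z) := ((Commute.refl a).pow_right 2).sub_right hca
  have hce : Commute (a * z) (a ^ 2 - a * z) :=
    (hca.symm.pow_right 2).sub_right (Commute.refl _)
  have hc1 : Commute a (1 - a * z) := (Commute.one_right a).sub_right hca
  have hsq : (a * (1 - a * z)) ^ 2 = (a ^ 2 - a * z) * (1 - a * z) := by
    have h5 : (a * (1 - a * z)) ^ 2 = a ^ 2 * (1 - a * z) ^ 2 := hc1.mul_pow 2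
    have h6 : ((1 : R) - a * z) ^ 2 = 1 - a * z := by rw [sq, hidem.one_sub.eq]
    have h8 : a * z * (1 - a * z) = 0 := by rw [mul_sub, mul_one, hidem.eq, sub_self]
    rw [h5, h6, sub_mul, h8, sub_zero]
  have hc2 : Commute (a ^ 2 - a * z) (1 - a * z) := (Commute.one_right _).sub_right hce.symm
  have hnil1 : IsNilpotent (a * (1 - a * z)) := by
    refine ⟨2 * k, ?_⟩
    rw [pow_mul, hsq, hc2.mul_pow k, hk, zero_mul]
  have hnil2 : IsNilpotent (a * (a ^ 2 - a * z)) := hcn.isNilpotent_mul_left ⟨k, hk⟩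
  have hcc : Commute (a * (1 - a * z)) (a * (a ^ 2 - a * z)) :=
    Commute.mul_left ((Commute.refl a).mul_right hcn)
      ((hc1.symm).mul_right ((Commute.one_left _).sub_left hce))
  have heq : a - a ^ 3 = a * (1 - a * z) + -(a * (a ^ 2 - a * z)) := by noncomm_ring
  rw [heq]
  exact Commute.isNilpotent_add hcc.neg_right hnil1 hnil2.neg

private lemma my_add_fin_two (a b c d e f g h : R) :
    (!![a, b; c, d] : Matrix (Fin 2) (Fin 2) R) + !![e, f; g, h]
      = !![a + e, b + f; c + g, d + h] := by
  ext i j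
  fin_cases i <;> fin_cases j <;> simp

private lemma my_sub_fin_two (a b c d e f g h : R) :
    (!![a, b; c, d] : Matrix (Fin 2) (Fin 2) R) - !![e, f; g, h]
      = !![a - e, b - f; c - g, d - h] := by
  ext i j
  fin_cases i <;> fin_cases j <;> simp

private lemma my_diag_pow (x z : R) (n : ℕ) :
    (!![x, 0; 0, z] : Matrix (Fin 2) (Fin 2) R) ^ n = !![x ^ n, 0; 0, z ^ n] := by
  induction n with
  | zero => simp [Matrix.one_fin_two]
  | succ n ih =>
    rw [pow_succ, ih, Matrix.mul_fin_two]
    ext i j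
    fin_cases i <;> fin_cases j <;> simp [pow_succ]

private lemma my_lower_tri_isNilpotent (x z c : R) (hx : IsNilpotent x) (hz : IsNilpotent z) :
    IsNilpotent (!![x, 0; c, z] : Matrix (Fin 2) (Fin 2) R) := by
  have hsplit : (!![x, 0; c, z] : Matrix (Fin 2) (Fin 2) R)
      = !![x, 0; 0, z] + !![0, 0; c, 0] := by
    rw [my_add_fin_two]
    norm_num
  rw [hsplit]
  apply my_isNilpotent_add
  · obtain ⟨i, hi⟩ := hx; obtain ⟨j, hj⟩ := hz
    refine ⟨i + j, ?_⟩
    rw [my_diag_pow]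
    have h1 : x ^ (i + j) = 0 := by rw [pow_add, hi, zero_mul]
    have h2 : z ^ (i + j) = 0 := by rw [pow_add, hj, mul_zero]
    rw [h1, h2]
    ext a b
    fin_cases a <;> fin_cases b <;> simp
  · intro j
    rw [my_diag_pow, Matrix.mul_fin_two, Matrix.mul_fin_two]
    ext a b
    fin_cases a <;> fin_cases b <;> simp

end GeneralRing

variable {X : Type*} [NormedAddCommGroup X] [NormedSpace ℂ X] [CompleteSpace X]

theorem hirano_matrix_thm34 (A B C D AH DH : X →L[ℂ] X)
    (hAH : A * AH = AH * A ∧ AH = AH * A * AH ∧ IsNilpotent (A ^ 2 - A * AH))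
    (hDH : D * DH = DH * D ∧ DH = DH * D * DH ∧ IsNilpotent (D ^ 2 - D * DH))
    (h1 : B * DH = 0)
    (h2 : (1 - A * AH) * B * C = 0)
    (h3 : AH * B * C = 0)
    (h4 : (D * (1 - D * DH) - C * AH * B) * C = 0) :
    HasHiranoInverse (!![A, B; C, D] : Matrix (Fin 2) (Fin 2) (X →L[ℂ] X)) := by
  obtain ⟨hA1, hA2, hA3⟩ := hAH
  obtain ⟨hD1, hD2, hD3⟩ := hDH
  -- basic scalar consequences
  have h3' : A * AH * B * C = 0 := by
    rw [mul_assoc A AH B, mul_assoc, h3, mul_zero]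
  have hBC : B * C = 0 := by
    have h2' := h2
    rw [sub_mul, sub_mul, one_mul] at h2'
    rwa [h3', sub_zero] at h2'
  have hBf : B * (D * DH) = 0 := by
    rw [hD1, ← mul_assoc, h1, zero_mul]
  have hCAHBC : C * AH * B * C = 0 := by
    rw [mul_assoc C AH B, mul_assoc, h3, mul_zero]
  have hDC : D * C = D * (D * DH) * C := by
    have h4' := h4
    rw [sub_mul, mul_sub, mul_one, sub_mul] at h4'
    rw [hCAHBC, sub_zero, sub_eq_zero] at h4'
    exact h4'
  have hcDf : Commute D (D * DH) := by
    unfold Commute SemiconjBy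
    rw [mul_assoc, ← hD1]
  -- B * D^m * C = 0 for all m
  have hcore : ∀ m : ℕ, B * (D ^ m * C) = 0 := by
    intro m
    cases m with
    | zero => simpa using hBC
    | succ m =>
      have e1 : D ^ (m + 1) * C = (D * DH) * (D ^ (m + 1) * C) := by
        calc D ^ (m + 1) * C = D ^ m * (D * C) := by rw [pow_succ, mul_assoc]
          _ = D ^ m * (D * (D * DH) * C) := by rw [← hDC]
          _ = D ^ m * ((D * DH) * (D * C)) := by
              congr 1
              rw [hcDf.eq, mul_assoc]
          _ = ((D * DH) * D ^ m) * (D * C) := by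
              rw [← mul_assoc, ← (hcDf.pow_left m).eq]
          _ = (D * DH) * (D ^ (m + 1) * C) := by
              rw [mul_assoc, ← mul_assoc (D ^ m) D C, ← pow_succ]
      rw [e1, ← mul_assoc, hBf, zero_mul]
  have zBDC : B * (D * C) = 0 := by
    have := hcore 1
    rwa [pow_one] at this
  have zBCv : ∀ v : X →L[ℂ] X, B * (C * v) = 0 := fun v => by
    rw [← mul_assoc, hBC, zero_mul]
  have zBDCv : ∀ v : X →L[ℂ] X, B * (D * (C * v)) = 0 := fun v => by
    have h : B * (D * (C * v)) = (B * (D * C)) * v := by simp only [mul_assoc]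
    rw [h, zBDC, zero_mul]
  -- commutation of D with (D - D^3)^j
  have hcDz : ∀ j : ℕ, Commute D ((D - D ^ 3) ^ j) :=
    fun j => ((Commute.refl D).sub_right ((Commute.refl D).pow_right 3)).pow_right j
  have hDW : ∀ j m : ℕ, D * ((D - D ^ 3) ^ j * (D ^ m * C))
      = (D - D ^ 3) ^ j * (D ^ (m + 1) * C) := by
    intro j m
    rw [← mul_assoc, (hcDz j).eq, mul_assoc, ← mul_assoc D, ← pow_succ']
  -- B * (D - D^3)^j * D^m * C = 0
  have hpolyK : ∀ j m : ℕ, B * ((D - D ^ 3) ^ j * (D ^ m * C)) = 0 := by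
    intro j
    induction j with
    | zero => intro m; rw [pow_zero, one_mul]; exact hcore m
    | succ j ih =>
      intro m
      have e1 : (D - D ^ 3) ^ (j + 1) * (D ^ m * C)
          = (D - D ^ 3) ^ j * (D ^ (m + 1) * C) - (D - D ^ 3) ^ j * (D ^ (m + 3) * C) := by
        rw [pow_succ, mul_assoc]
        rw [sub_mul, mul_sub]
        congr 1
        · rw [← mul_assoc D, ← pow_succ']
        · rw [← mul_assoc (D ^ 3), ← pow_add]
          norm_num [add_comm]
      rw [e1, mul_sub, ih (m + 1), ih (m + 3), sub_zero]
  -- definitions of the pieces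
  set q : X →L[ℂ] X := B - A * (A * B) - A * (B * D) - B * (D * D) with hq_def
  set s : X →L[ℂ] X := C * (A * B) + C * (B * D) + D * (C * B) with hs_def
  set c : X →L[ℂ] X := C - C * (A * A) - D * (C * A) - D * (D * C) with hc_def
  have hqK : ∀ j m : ℕ, q * ((D - D ^ 3) ^ j * (D ^ m * C)) = 0 := by
    intro j m
    have k0 := hpolyK j m
    have k1 := hpolyK j (m + 1)
    have k2 := hpolyK j (m + 2)
    rw [← hDW j m] at k1
    rw [← hDW j (m + 1), ← hDW j m] at k2
    rw [hq_def]
    simp only [sub_mul, mul_assoc] at k0 k1 k2 ⊢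
    simp only [k0, k1, k2, mul_zero, sub_zero]
  have hsK : ∀ j m : ℕ, s * ((D - D ^ 3) ^ j * (D ^ m * C)) = 0 := by
    intro j m
    have k0 := hpolyK j m
    have k1 := hpolyK j (m + 1)
    rw [← hDW j m] at k1
    rw [hs_def]
    simp only [add_mul, mul_assoc] at k0 k1 ⊢
    simp only [k0, k1, mul_zero, add_zero, zero_add]
  -- specialized instances
  have hqC : ∀ j : ℕ, q * ((D - D ^ 3) ^ j * C) = 0 := fun j => by
    have := hqK j 0; rwa [pow_zero, one_mul] at this
  have hqDC : ∀ j : ℕ, q * ((D - D ^ 3) ^ j * (D * C)) = 0 := fun j => by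
    have := hqK j 1; rwa [pow_one] at this
  have hqDDC : ∀ j : ℕ, q * ((D - D ^ 3) ^ j * (D * (D * C))) = 0 := fun j => by
    have := hqK j 2; rwa [sq, mul_assoc] at this
  have hsC : ∀ j : ℕ, s * ((D - D ^ 3) ^ j * C) = 0 := fun j => by
    have := hsK j 0; rwa [pow_zero, one_mul] at this
  have hsDC : ∀ j : ℕ, s * ((D - D ^ 3) ^ j * (D * C)) = 0 := fun j => by
    have := hsK j 1; rwa [pow_one] at this
  have hsDDC : ∀ j : ℕ, s * ((D - D ^ 3) ^ j * (D * (D * C))) = 0 := fun j => by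
    have := hsK j 2; rwa [sq, mul_assoc] at this
  -- the triangular part and the corner part
  set t : Matrix (Fin 2) (Fin 2) (X →L[ℂ] X) := !![A - A ^ 3, 0; c, D - D ^ 3] with ht_def
  set u : Matrix (Fin 2) (Fin 2) (X →L[ℂ] X) := !![0, q; 0, -s] with hu_def
  -- q * (z * c) = 0 and s * (z * c) = 0
  have hqzc : ∀ j : ℕ, q * ((D - D ^ 3) ^ j * c) = 0 := by
    intro j
    have m2 : q * ((D - D ^ 3) ^ j * (C * (A * A))) = 0 := by
      have h : q * ((D - D ^ 3) ^ j * (C * (A * A))) = (q * ((D - D ^ 3) ^ j * C)) * (A * A) := by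
        simp only [mul_assoc]
      rw [h, hqC j, zero_mul]
    have m3 : q * ((D - D ^ 3) ^ j * (D * (C * A))) = 0 := by
      have h : q * ((D - D ^ 3) ^ j * (D * (C * A)))
          = (q * ((D - D ^ 3) ^ j * (D * C))) * A := by simp only [mul_assoc]
      rw [h, hqDC j, zero_mul]
    rw [hc_def]
    simp only [mul_sub, sub_eq_zero] at *
    simp only [mul_sub, hqC j, m2, m3, hqDDC j, sub_zero, zero_sub, neg_zero]
  have hszc : ∀ j : ℕ, s * ((D - D ^ 3) ^ j * c) = 0 := by
    intro j
    have m2 : s * ((D - D ^ 3) ^ j * (C * (A * A))) = 0 := by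
      have h : s * ((D - D ^ 3) ^ j * (C * (A * A))) = (s * ((D - D ^ 3) ^ j * C)) * (A * A) := by
        simp only [mul_assoc]
      rw [h, hsC j, zero_mul]
    have m3 : s * ((D - D ^ 3) ^ j * (D * (C * A))) = 0 := by
      have h : s * ((D - D ^ 3) ^ j * (D * (C * A)))
          = (s * ((D - D ^ 3) ^ j * (D * C))) * A := by simp only [mul_assoc]
      rw [h, hsDC j, zero_mul]
    rw [hc_def]
    simp only [mul_sub, hsC j, m2, m3, hsDDC j, sub_zero, zero_sub, neg_zero]
  -- shape of powers of t
  have key : ∀ j : ℕ, ∃ y, t ^ j = !![(A - A ^ 3) ^ j, 0; y, (D - D ^ 3) ^ j]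
      ∧ q * y = 0 ∧ s * y = 0 := by
    intro j
    induction j with
    | zero =>
      refine ⟨0, ?_, by rw [mul_zero], by rw [mul_zero]⟩
      rw [pow_zero, pow_zero, pow_zero, Matrix.one_fin_two]
    | succ j ih =>
      obtain ⟨y, hty, hqy, hsy⟩ := ih
      refine ⟨y * (A - A ^ 3) + (D - D ^ 3) ^ j * c, ?_, ?_, ?_⟩
      · rw [pow_succ, hty, ht_def, Matrix.mul_fin_two]
        ext i j'
        fin_cases i <;> fin_cases j' <;>
          simp [pow_succ, mul_zero, zero_mul, add_zero, zero_add]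
      · rw [mul_add, ← mul_assoc q y, hqy, zero_mul, zero_add, hqzc j]
      · rw [mul_add, ← mul_assoc s y, hsy, zero_mul, zero_add, hszc j]
  -- u * (t^j * u) = 0
  have hu : ∀ j : ℕ, u * (t ^ j * u) = 0 := by
    intro j
    obtain ⟨y, hty, hqy, hsy⟩ := key j
    have hqzs : q * ((D - D ^ 3) ^ j * s) = 0 := by
      have m1 : q * ((D - D ^ 3) ^ j * (C * (A * B))) = 0 := by
        have h : q * ((D - D ^ 3) ^ j * (C * (A * B))) = (q * ((D - D ^ 3) ^ j * C)) * (A * B) := by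
          simp only [mul_assoc]
        rw [h, hqC j, zero_mul]
      have m2 : q * ((D - D ^ 3) ^ j * (C * (B * D))) = 0 := by
        have h : q * ((D - D ^ 3) ^ j * (C * (B * D))) = (q * ((D - D ^ 3) ^ j * C)) * (B * D) := by
          simp only [mul_assoc]
        rw [h, hqC j, zero_mul]
      have m3 : q * ((D - D ^ 3) ^ j * (D * (C * B))) = 0 := by
        have h : q * ((D - D ^ 3) ^ j * (D * (C * B)))
            = (q * ((D - D ^ 3) ^ j * (D * C))) * B := by simp only [mul_assoc]
        rw [h, hqDC j, zero_mul]
      rw [hs_def]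
      simp only [mul_add, m1, m2, m3, add_zero]
    have hszs : s * ((D - D ^ 3) ^ j * s) = 0 := by
      have m1 : s * ((D - D ^ 3) ^ j * (C * (A * B))) = 0 := by
        have h : s * ((D - D ^ 3) ^ j * (C * (A * B))) = (s * ((D - D ^ 3) ^ j * C)) * (A * B) := by
          simp only [mul_assoc]
        rw [h, hsC j, zero_mul]
      have m2 : s * ((D - D ^ 3) ^ j * (C * (B * D))) = 0 := by
        have h : s * ((D - D ^ 3) ^ j * (C * (B * D))) = (s * ((D - D ^ 3) ^ j * C)) * (B * D) := by
          simp only [mul_assoc]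
        rw [h, hsC j, zero_mul]
      have m3 : s * ((D - D ^ 3) ^ j * (D * (C * B))) = 0 := by
        have h : s * ((D - D ^ 3) ^ j * (D * (C * B)))
            = (s * ((D - D ^ 3) ^ j * (D * C))) * B := by simp only [mul_assoc]
        rw [h, hsDC j, zero_mul]
      rw [hs_def] at m1 m2 m3 ⊢
      simp only [mul_add, m1, m2, m3, add_zero]
    rw [hty, hu_def, Matrix.mul_fin_two, Matrix.mul_fin_two]
    ext i j'
    fin_cases i <;> fin_cases j' <;>
      simp only [Matrix.cons_val', Matrix.cons_val_zero, Matrix.cons_val_one, Matrix.head_cons,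
        Matrix.empty_val', Matrix.cons_val_fin_one, Matrix.head_fin_const, Matrix.zero_apply,
        mul_zero, zero_mul, add_zero, zero_add, mul_neg, neg_mul, neg_zero, mul_add, neg_add] <;>
      rw [← mul_assoc q y, hqy, ← mul_assoc s y, hsy] <;>
      simp only [zero_mul, neg_zero, zero_add, add_zero, mul_neg, ← mul_assoc] <;>
      simp only [mul_assoc, hqzs, hszs, neg_zero, add_zero, zero_add] <;>
      simp
  -- nilpotency of t
  have hnA : IsNilpotent (A - A ^ 3) := my_isNilpotent_sub_cube A AH hA1 hA2 hA3
  have hnD : IsNilpotent (D - D ^ 3) := my_isNilpotent_sub_cube D DH hD1 hD2 hD3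
  have ht : IsNilpotent t := by
    rw [ht_def]
    exact my_lower_tri_isNilpotent _ _ _ hnA hnD
  -- M - M^3 = t + u
  set M : Matrix (Fin 2) (Fin 2) (X →L[ℂ] X) := !![A, B; C, D] with hM_def
  have hM3 : M ^ 3 = !![(A * A + B * C) * A + (A * B + B * D) * C,
        (A * A + B * C) * B + (A * B + B * D) * D;
        (C * A + D * C) * A + (C * B + D * D) * C,
        (C * A + D * C) * B + (C * B + D * D) * D] := by
    rw [hM_def, pow_succ, pow_succ, pow_one, Matrix.mul_fin_two, Matrix.mul_fin_two]
  have hMM : M - M ^ 3 = t + u := by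
    have e00 : A - ((A * A + B * C) * A + (A * B + B * D) * C) = (A - A ^ 3) + 0 := by
      simp only [pow_succ, pow_zero, one_mul, add_mul, mul_add, mul_assoc, hBC, zBCv, zBDC,
        zBDCv, mul_zero, zero_mul, add_zero, zero_add]
    have e01 : B - ((A * A + B * C) * B + (A * B + B * D) * D) = 0 + q := by
      rw [hq_def]
      simp only [pow_succ, pow_zero, one_mul, add_mul, mul_add, mul_assoc, hBC, zBCv, zBDC,
        zBDCv, mul_zero, zero_mul, add_zero, zero_add]
      abel
    have e10 : C - ((C * A + D * C) * A + (C * B + D * D) * C) = c + 0 := by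
      rw [hc_def]
      simp only [pow_succ, pow_zero, one_mul, add_mul, mul_add, mul_assoc, hBC, zBCv, zBDC,
        zBDCv, mul_zero, zero_mul, add_zero, zero_add]
      abel
    have e11 : D - ((C * A + D * C) * B + (C * B + D * D) * D) = (D - D ^ 3) + -s := by
      rw [hs_def]
      simp only [pow_succ, pow_zero, one_mul, add_mul, mul_add, mul_assoc, hBC, zBCv, zBDC,
        zBDCv, mul_zero, zero_mul, add_zero, zero_add]
      abel
    rw [hM3, hM_def, ht_def, hu_def, my_sub_fin_two, my_add_fin_two, e00, e01, e10, e11]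
  have hnilM : IsNilpotent (M - M ^ 3) := by
    rw [hMM]
    exact my_isNilpotent_add t u ht hu
  exact my_hasHiranoInverse_of M hnilM
end

section
/- Let X be a complex Banach space and L(X) the Banach algebra of bounded linear operators on X. Let M = [[A, B], [C, D]] ∈ M₂(L(X)) and suppose A and D have Hirano inverses A^H and D^H. If B D^H = 0, BC = 0 and D·D^π·C = 0, where D^π = I − D·D^H, then M has a Hirano inverse in M₂(L(X)). -/
section AuxRing
variable {R : Type*} [Ring R]

private lemma aux_nilp_add_of_mul_eq_zero {t u : R}
    (h : u * t = 0) (ht : IsNilpotent t) (hu : IsNilpotent u) : IsNilpotent (t + u) := by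
  obtain ⟨p, hp⟩ := ht
  obtain ⟨q, hq⟩ := hu
  have key1 : ∀ k, (t + u) ^ k * t = t ^ (k + 1) := by
    intro k
    induction k with
    | zero => simp
    | succ k ih =>
      have hut : u * t ^ (k + 1) = 0 := by rw [pow_succ', ← mul_assoc, h, zero_mul]
      rw [pow_succ', mul_assoc, ih, add_mul, hut, add_zero, ← pow_succ']
  have key2 : ∀ j, (t + u) ^ (p + j) = (t + u) ^ p * u ^ j := by
    intro j
    induction j with
    | zero => simp
    | succ j ih =>
      have hz : (t + u) ^ p * u ^ j * t = 0 := by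
        cases j with
        | zero => rw [pow_zero, mul_one, key1 p, pow_succ, hp, zero_mul]
        | succ j => rw [mul_assoc, pow_succ, mul_assoc, h, mul_zero, mul_zero]
      calc (t + u) ^ (p + (j + 1)) = (t + u) ^ (p + j) * (t + u) := by
            rw [← pow_succ, Nat.add_succ]
        _ = (t + u) ^ p * u ^ j * t + (t + u) ^ p * u ^ j * u := by rw [ih, mul_add]
        _ = (t + u) ^ p * u ^ (j + 1) := by rw [hz, zero_add, mul_assoc, ← pow_succ]
  exact ⟨p + q, by rw [key2 q, hq, mul_zero]⟩

private lemma aux_nilp_mul_swap {a b : R} (h : IsNilpotent (b * a)) : IsNilpotent (a * b) := by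
  obtain ⟨k, hk⟩ := h
  have key : ∀ m, (a * b) ^ (m + 1) = a * (b * a) ^ m * b := by
    intro m
    induction m with
    | zero => simp [mul_assoc]
    | succ m ih =>
      rw [pow_succ, ih, pow_succ]
      simp only [mul_assoc]
  exact ⟨k + 1, by rw [key k, hk, mul_zero, zero_mul]⟩

private lemma aux_nilp_of_sq {x : R} (h : IsNilpotent (x * x)) : IsNilpotent x := by
  obtain ⟨k, hk⟩ := h
  exact ⟨2 * k, by rw [pow_mul, pow_two, hk]⟩

private lemma aux_decomp3 {s n : R} (h : n * s = 0) :
    (s + n) - (s + n) ^ 3 = (s - s ^ 3) + (1 - s ^ 2 - s * n - n ^ 2) * n := by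
  have r : ∀ x : R, n * (s * x) = 0 := fun x => by rw [← mul_assoc, h, zero_mul]
  simp only [pow_succ, pow_zero, one_mul, mul_add, add_mul, sub_mul, mul_sub, mul_one,
    mul_assoc, h, r, mul_zero, zero_mul, add_zero, zero_add, sub_zero]
  abel

private lemma aux_nW_eq {s n : R} (h : n * s = 0) :
    n * (1 - s ^ 2 - s * n - n ^ 2) = n - n ^ 3 := by
  have r : ∀ x : R, n * (s * x) = 0 := fun x => by rw [← mul_assoc, h, zero_mul]
  simp only [pow_succ, pow_zero, one_mul, mul_add, add_mul, sub_mul, mul_sub, mul_one,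
    mul_assoc, h, r, mul_zero, zero_mul, add_zero, zero_add, sub_zero]

private lemma aux_UT_zero {s n : R} (h : n * s = 0) :
    ((1 - s ^ 2 - s * n - n ^ 2) * n) * (s - s ^ 3) = 0 := by
  have r : ∀ x : R, n * (s * x) = 0 := fun x => by rw [← mul_assoc, h, zero_mul]
  simp only [pow_succ, pow_zero, one_mul, mul_sub, mul_assoc, h, r, mul_zero, sub_zero,
    sub_self]

private lemma aux_nilp_sub_cube_self {n : R} (hn : IsNilpotent n) : IsNilpotent (n - n ^ 3) := by
  have : n - n ^ 3 = n * (1 - n ^ 2) := by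
    rw [mul_sub, mul_one, ← pow_succ']
  rw [this]
  exact (Commute.sub_right (Commute.one_right n) ((Commute.refl n).pow_right 2)).isNilpotent_mul_right hn

private lemma aux_nilp_mul_one_sub_idem {a e : R} (he : e * e = e) (hc : a * e = e * a)
    (h3 : IsNilpotent (a ^ 2 - e)) : IsNilpotent (a * (1 - e)) := by
  have c_ae : Commute a e := hc
  have r1 : e * a = a * e := hc.symm
  have r2 : ∀ x : R, e * (a * x) = a * (e * x) := fun x => by rw [← mul_assoc, r1, mul_assoc]
  have r3 : ∀ x : R, e * (e * x) = e * x := fun x => by rw [← mul_assoc, he]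
  have key : (a * (1 - e)) * (a * (1 - e)) = (a ^ 2 - e) * (1 - e) := by
    simp only [pow_succ, pow_zero, one_mul, mul_sub, sub_mul, mul_one,
      mul_assoc, r1, r2, r3, he]
    abel
  have hcomm : Commute (a ^ 2 - e) (1 - e) :=
    Commute.sub_left
      (Commute.sub_right (Commute.one_right _) (c_ae.pow_left 2))
      (Commute.sub_right (Commute.one_right _) (Commute.refl e))
  exact aux_nilp_of_sq (key ▸ hcomm.isNilpotent_mul_right h3)

private lemma aux_nilp_sub_pow3_of_idem {a e : R} (he : e * e = e) (hc : a * e = e * a)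
    (h3 : IsNilpotent (a ^ 2 - e)) : IsNilpotent (a - a ^ 3) := by
  have c_ae : Commute a e := hc
  have n2 : IsNilpotent (a * (1 - e)) := aux_nilp_mul_one_sub_idem he hc h3
  have n1 : IsNilpotent (a * (a ^ 2 - e)) :=
    Commute.isNilpotent_mul_left
      (Commute.sub_right ((Commute.refl a).pow_right 2) c_ae) h3
  have hsum : a - a ^ 3 = a * (1 - e) - a * (a ^ 2 - e) := by
    simp only [pow_succ, pow_zero, one_mul, mul_sub, mul_one, mul_assoc]
    abel
  rw [hsum]
  have c_a_1e : Commute a (1 - e) := Commute.sub_right (Commute.one_right a) c_ae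
  have c_a_sq : Commute a (a ^ 2 - e) :=
    Commute.sub_right ((Commute.refl a).pow_right 2) c_ae
  have c_1e_sq : Commute (1 - e) (a ^ 2 - e) :=
    Commute.sub_left (Commute.one_left _)
      (Commute.sub_right ((c_ae.symm).pow_right 2) (Commute.refl e))
  exact Commute.isNilpotent_sub
    (Commute.mul_left ((Commute.refl a).mul_right c_a_sq)
      ((c_a_1e.symm).mul_right c_1e_sq)) n2 n1

private lemma aux_nilp_a_sub_a3 {a z : R}
    (h1 : a * z = z * a) (h2 : z = z * a * z) (h3 : IsNilpotent (a ^ 2 - a * z)) :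
    IsNilpotent (a - a ^ 3) := by
  have hea : a * (a * z) = (a * z) * a := by
    calc a * (a * z) = a * (z * a) := by rw [h1]
    _ = a * z * a := by rw [mul_assoc]
  have he : (a * z) * (a * z) = a * z := by
    calc (a * z) * (a * z) = a * (z * a * z) := by rw [mul_assoc, ← mul_assoc z a z]
    _ = a * z := by rw [← h2]
  exact aux_nilp_sub_pow3_of_idem he hea h3

private lemma aux_idem_cube_factor {a e : R} (he : e * e = e) (hc : a * e = e * a) :
    (a * e) - (a * e) ^ 3 = (a - a ^ 3) * e := by
  have r1 : e * a = a * e := hc.symm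
  have r2 : ∀ x : R, e * (a * x) = a * (e * x) := fun x => by rw [← mul_assoc, r1, mul_assoc]
  have r3 : ∀ x : R, e * (e * x) = e * x := fun x => by rw [← mul_assoc, he]
  simp only [pow_succ, pow_zero, one_mul, sub_mul, mul_assoc, r1, r2, r3, he]

end AuxRing

open Polynomial in
private noncomputable def hseq : ℕ → Polynomial ℤ
  | 0 => X ^ 2
  | (k + 1) => 3 * (hseq k) ^ 2 - 2 * (hseq k) ^ 3

open Polynomial in
private lemma hseq_spec (k : ℕ) :
    ((X ^ 2 - X ^ 4 : Polynomial ℤ) ^ (2 ^ k) ∣ (hseq k - (hseq k) ^ 2)) ∧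
    ((X ^ 2 : Polynomial ℤ) ∣ hseq k) ∧
    ((X ^ 2 - X ^ 4 : Polynomial ℤ) ∣ (hseq k - X ^ 2)) := by
  induction k with
  | zero =>
    refine ⟨⟨1, ?_⟩, ⟨1, ?_⟩, ⟨0, ?_⟩⟩ <;> simp [hseq] <;> ring
  | succ k ih =>
    obtain ⟨⟨q, hq⟩, ⟨r, hr⟩, ⟨g, hg⟩⟩ := ih
    have hdef : hseq (k + 1) = 3 * (hseq k) ^ 2 - 2 * (hseq k) ^ 3 := rfl
    have h2k : (2 : ℕ) ^ k = (2 ^ k - 1) + 1 := (Nat.succ_pred_eq_of_pos (Nat.two_pow_pos k)).symm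
    refine ⟨⟨q ^ 2 * (3 + 4 * (hseq k) - 4 * (hseq k) ^ 2), ?_⟩,
           ⟨r * (3 * (hseq k) - 2 * (hseq k) ^ 2), ?_⟩,
           ⟨(X ^ 2 - X ^ 4) ^ (2 ^ k - 1) * q * (2 * (hseq k) - 1) + g, ?_⟩⟩
    · calc hseq (k + 1) - (hseq (k + 1)) ^ 2
          = (hseq k - (hseq k) ^ 2) ^ 2 * (3 + 4 * (hseq k) - 4 * (hseq k) ^ 2) := by
            rw [hdef]; ring
        _ = ((X ^ 2 - X ^ 4) ^ 2 ^ k * q) ^ 2 * (3 + 4 * (hseq k) - 4 * (hseq k) ^ 2) := by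
            rw [hq]
        _ = (X ^ 2 - X ^ 4) ^ 2 ^ (k + 1) * (q ^ 2 * (3 + 4 * (hseq k) - 4 * (hseq k) ^ 2)) := by
            have hp : (X ^ 2 - X ^ 4 : Polynomial ℤ) ^ 2 ^ (k + 1)
                = ((X ^ 2 - X ^ 4) ^ 2 ^ k) ^ 2 := by
              rw [pow_succ 2 k, pow_mul]
            rw [hp]; ring
    · rw [hdef, hr]; ring
    · calc hseq (k + 1) - X ^ 2
          = (hseq k - (hseq k) ^ 2) * (2 * (hseq k) - 1) + (hseq k - X ^ 2) := by
            rw [hdef]; ring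
        _ = (X ^ 2 - X ^ 4) ^ 2 ^ k * q * (2 * (hseq k) - 1) + (X ^ 2 - X ^ 4) * g := by
            rw [hq, hg]
        _ = (X ^ 2 - X ^ 4) *
              ((X ^ 2 - X ^ 4) ^ (2 ^ k - 1) * q * (2 * (hseq k) - 1) + g) := by
            have hsplit : (X ^ 2 - X ^ 4 : Polynomial ℤ) ^ 2 ^ k
                = (X ^ 2 - X ^ 4) * (X ^ 2 - X ^ 4) ^ (2 ^ k - 1) := by
              conv_lhs => rw [h2k]
              rw [pow_succ']
            rw [hsplit]; ring

open Polynomial in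
private lemma aux_hasHirano_of_nilp {R : Type*} [Ring R] {a : R}
    (h : IsNilpotent (a - a ^ 3)) : HasHiranoInverse a := by
  obtain ⟨n₀, hn₀⟩ := h
  set n := n₀ + 1 with hn_def
  have hn : (a - a ^ 3) ^ n = 0 := by rw [hn_def, pow_succ, hn₀, zero_mul]
  have comm : ∀ p q : Polynomial ℤ, aeval a p * aeval a q = aeval a q * aeval a p := by
    intro p q
    rw [← map_mul, ← map_mul, mul_comm]
  have comm' : ∀ p : Polynomial ℤ, a * aeval a p = aeval a p * a := by
    intro p
    have := comm X p
    rwa [aeval_X] at this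
  have hfac : a ^ 2 - (a ^ 2) ^ 2 = a * (a - a ^ 3) := by noncomm_ring
  have hca : Commute a (a - a ^ 3) :=
    Commute.sub_right (Commute.refl a) ((Commute.refl a).pow_right 3)
  have hx : (a ^ 2 - (a ^ 2) ^ 2) ^ n = 0 := by
    rw [hfac, hca.mul_pow, hn, mul_zero]
  have hXX : (aeval a (X ^ 2 - X ^ 4 : Polynomial ℤ)) = a ^ 2 - (a ^ 2) ^ 2 := by
    rw [map_sub, map_pow, map_pow, aeval_X, ← pow_mul]
  have hzero : (aeval a ((X ^ 2 - X ^ 4 : Polynomial ℤ) ^ (2 ^ n))) = 0 := by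
    have hle : n ≤ 2 ^ n := (Nat.lt_two_pow_self (n := n)).le
    rw [map_pow, hXX, ← Nat.add_sub_cancel' hle, pow_add, hx, zero_mul]
  obtain ⟨⟨q, hq⟩, ⟨r, hr⟩, ⟨g, hg⟩⟩ := hseq_spec n
  set e := aeval a (hseq n) with he_def
  have hee : e * e = e := by
    have h0 : e - e * e = 0 := by
      have := congrArg (aeval a) hq
      rw [map_sub, map_mul, hzero, zero_mul, map_pow, ← he_def, pow_two] at this
      exact this
    exact (sub_eq_zero.mp h0).symm
  set z := aeval a ((X : Polynomial ℤ) * r * hseq n) with hz_def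
  have haz : a * z = e := by
    have e1 : a * z = aeval a ((X : Polynomial ℤ) * (X * r * hseq n)) := by
      rw [map_mul, aeval_X, hz_def]
    have e2 : (X : Polynomial ℤ) * (X * r * hseq n) = hseq n * hseq n := by
      rw [hr]; ring
    rw [e1, e2, map_mul, ← he_def, hee]
  have cond1 : a * z = z * a := comm' _
  have hez : e * z = z := by
    have hz2 : z = aeval a ((X : Polynomial ℤ) * r) * e := by
      rw [hz_def, he_def, ← map_mul]
    rw [hz2, ← mul_assoc, comm (hseq n) (X * r), mul_assoc, ← he_def, hee]
  have cond2 : z = z * a * z := by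
    have : z * a * z = z := by
      rw [show z * a = a * z from cond1.symm, haz, hez]
    exact this.symm
  have hnilXX : IsNilpotent (aeval a (X ^ 2 - X ^ 4 : Polynomial ℤ)) :=
    ⟨n, by rw [hXX]; exact hx⟩
  have cond3 : IsNilpotent (a ^ 2 - a * z) := by
    rw [haz]
    have hsub : e - a ^ 2 = aeval a (X ^ 2 - X ^ 4 : Polynomial ℤ) * aeval a g := by
      rw [← map_mul, ← hg, map_sub, map_pow, aeval_X, ← he_def]
    have : IsNilpotent (e - a ^ 2) := by
      rw [hsub]
      exact Commute.isNilpotent_mul_right (comm _ _) hnilXX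
    rw [← neg_sub]
    exact this.neg
  exact ⟨z, cond1, cond2, cond3⟩

section MatrixLemmas
variable {R : Type*} [Ring R]

private lemma fin2_add (a b c d e f g h : R) :
    (!![a, b; c, d] + !![e, f; g, h] : Matrix (Fin 2) (Fin 2) R) =
      !![a + e, b + f; c + g, d + h] := by
  ext i j
  fin_cases i <;> fin_cases j <;> simp

private lemma fin2_sub (a b c d e f g h : R) :
    (!![a, b; c, d] - !![e, f; g, h] : Matrix (Fin 2) (Fin 2) R) =
      !![a - e, b - f; c - g, d - h] := by
  ext i j
  fin_cases i <;> fin_cases j <;> simp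

private lemma fin2_zero : (!![0, 0; 0, 0] : Matrix (Fin 2) (Fin 2) R) = 0 := by
  ext i j
  fin_cases i <;> fin_cases j <;> rfl

private lemma pow_ll (a c : R) :
    ∀ k : ℕ, (!![a, 0; c, 0] : Matrix (Fin 2) (Fin 2) R) ^ (k + 1) =
      !![a ^ (k + 1), 0; c * a ^ k, 0]
  | 0 => by simp
  | (k + 1) => by
    rw [pow_succ, pow_ll a c k, Matrix.mul_fin_two]
    simp [pow_succ, mul_assoc]

private lemma pow_dr (d : R) :
    ∀ k : ℕ, (!![0, 0; 0, d] : Matrix (Fin 2) (Fin 2) R) ^ (k + 1) =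
      !![0, 0; 0, d ^ (k + 1)]
  | 0 => by simp
  | (k + 1) => by
    rw [pow_succ, pow_dr d k, Matrix.mul_fin_two]
    simp [pow_succ]

private lemma pow_ur (b d : R) :
    ∀ k : ℕ, (!![0, b; 0, d] : Matrix (Fin 2) (Fin 2) R) ^ (k + 1) =
      !![0, b * d ^ k; 0, d ^ (k + 1)]
  | 0 => by simp
  | (k + 1) => by
    rw [pow_succ, pow_ur b d k, Matrix.mul_fin_two]
    simp [pow_succ, mul_assoc]

private lemma nilp_lower_tri {a c d : R} (ha : IsNilpotent a) (hd : IsNilpotent d) :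
    IsNilpotent (!![a, 0; c, d] : Matrix (Fin 2) (Fin 2) R) := by
  obtain ⟨p, hp⟩ := ha
  obtain ⟨m, hm⟩ := hd
  have hX : IsNilpotent (!![a, 0; c, 0] : Matrix (Fin 2) (Fin 2) R) :=
    ⟨p + 1, by rw [pow_ll, hp, pow_succ, hp, zero_mul, mul_zero, fin2_zero]⟩
  have hY : IsNilpotent (!![(0 : R), 0; 0, d] : Matrix (Fin 2) (Fin 2) R) :=
    ⟨m + 1, by rw [pow_dr, pow_succ, hm, zero_mul, fin2_zero]⟩
  have hXY : (!![a, 0; c, 0] : Matrix (Fin 2) (Fin 2) R) * !![(0 : R), 0; 0, d] = 0 := by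
    rw [Matrix.mul_fin_two]
    simpa using fin2_zero
  have hsum : (!![(0 : R), 0; 0, d] : Matrix (Fin 2) (Fin 2) R) + !![a, 0; c, 0]
      = !![a, 0; c, d] := by
    rw [fin2_add]; simp
  rw [← hsum]
  exact aux_nilp_add_of_mul_eq_zero hXY hY hX

end MatrixLemmas

variable {X : Type*} [NormedAddCommGroup X] [NormedSpace ℂ X] [CompleteSpace X]

theorem hirano_matrix_cor35 (A B C D AH DH : X →L[ℂ] X)
    (hAH : A * AH = AH * A ∧ AH = AH * A * AH ∧ IsNilpotent (A ^ 2 - A * AH))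
    (hDH : D * DH = DH * D ∧ DH = DH * D * DH ∧ IsNilpotent (D ^ 2 - D * DH))
    (h1 : B * DH = 0)
    (h2 : B * C = 0)
    (h3 : D * (1 - D * DH) * C = 0) :
    HasHiranoInverse (!![A, B; C, D] : Matrix (Fin 2) (Fin 2) (X →L[ℂ] X)) := by
  obtain ⟨hAc, hAz, hAn⟩ := hAH
  obtain ⟨hDc, hDz, hDn⟩ := hDH
  have hA3 : IsNilpotent (A - A ^ 3) := aux_nilp_a_sub_a3 hAc hAz hAn
  have hD3 : IsNilpotent (D - D ^ 3) := aux_nilp_a_sub_a3 hDc hDz hDn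
  -- idempotent e = D * DH
  have he : (D * DH) * (D * DH) = D * DH := by
    calc (D * DH) * (D * DH) = D * (DH * D * DH) := by rw [mul_assoc, ← mul_assoc DH D DH]
    _ = D * DH := by rw [← hDz]
  have hc : D * (D * DH) = (D * DH) * D := by
    calc D * (D * DH) = D * (DH * D) := by rw [hDc]
    _ = (D * DH) * D := by rw [← mul_assoc]
  have hBe : B * (D * DH) = 0 := by
    rw [hDc, ← mul_assoc, h1, zero_mul]
  have hD2 : IsNilpotent (D * (1 - D * DH)) := aux_nilp_mul_one_sub_idem he hc hDn
  -- matrices S and N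
  have hBDe : B * (D * (D * DH)) = 0 := by rw [hc, ← mul_assoc, hBe, zero_mul]
  have h1e : (1 - D * DH) * D = D * (1 - D * DH) := by
    rw [sub_mul, mul_sub, one_mul, mul_one, hc]
  have hD2De : (D * (1 - D * DH)) * (D * (D * DH)) = 0 := by
    calc (D * (1 - D * DH)) * (D * (D * DH))
        = D * (((1 - D * DH) * D) * (D * DH)) := by
          rw [mul_assoc, ← mul_assoc (1 - D * DH) D (D * DH)]
      _ = D * ((D * (1 - D * DH)) * (D * DH)) := by rw [h1e]
      _ = D * (D * ((1 - D * DH) * (D * DH))) := by rw [mul_assoc D (1 - D * DH) (D * DH)]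
      _ = 0 := by rw [sub_mul, one_mul, he, sub_self, mul_zero, mul_zero]
  have hNS : (!![0, B; 0, D * (1 - D * DH)] : Matrix (Fin 2) (Fin 2) (X →L[ℂ] X)) *
      !![A, 0; C, D * (D * DH)] = 0 := by
    rw [Matrix.mul_fin_two]
    simp only [zero_mul, mul_zero, zero_add, add_zero, h2, h3, hBDe, hD2De]
    exact fin2_zero
  -- decomposition of M
  have hDsum : D * (D * DH) + D * (1 - D * DH) = D := by
    rw [mul_sub, mul_one]; abel
  have hM : (!![A, B; C, D] : Matrix (Fin 2) (Fin 2) (X →L[ℂ] X)) =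
      !![A, 0; C, D * (D * DH)] + !![0, B; 0, D * (1 - D * DH)] := by
    rw [fin2_add, hDsum]
    simp
  -- N is nilpotent
  have hN : IsNilpotent (!![0, B; 0, D * (1 - D * DH)] : Matrix (Fin 2) (Fin 2) (X →L[ℂ] X)) := by
    obtain ⟨m, hm⟩ := hD2
    exact ⟨m + 1, by rw [pow_ur, hm, mul_zero, pow_succ, hm, zero_mul, fin2_zero]⟩
  -- S - S^3 is nilpotent
  have cube : ∀ {S : Type _} [Ring S], ∀ x : S, x ^ 3 = x * x * x := by
    intro S _ x
    rw [show (3 : ℕ) = 2 + 1 from rfl, pow_succ, pow_two]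
  have hDe3 : IsNilpotent (D * (D * DH) - (D * (D * DH)) ^ 3) := by
    rw [aux_idem_cube_factor he hc]
    have hcD : Commute D (D * DH) := hc
    have hcomm : Commute (D - D ^ 3) (D * DH) :=
      Commute.sub_left hcD (hcD.pow_left 3)
    exact hcomm.isNilpotent_mul_right hD3
  have hS3 : (!![A, 0; C, D * (D * DH)] : Matrix (Fin 2) (Fin 2) (X →L[ℂ] X)) ^ 3 =
      !![A * A * A, 0;
         (C * A + (D * (D * DH)) * C) * A + ((D * (D * DH)) * (D * (D * DH))) * C,
         (D * (D * DH)) * (D * (D * DH)) * (D * (D * DH))] := by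
    rw [cube, Matrix.mul_fin_two, Matrix.mul_fin_two]
    simp [mul_assoc]
  have hT : IsNilpotent ((!![A, 0; C, D * (D * DH)] : Matrix (Fin 2) (Fin 2) (X →L[ℂ] X)) -
      (!![A, 0; C, D * (D * DH)]) ^ 3) := by
    rw [hS3, fin2_sub, sub_self]
    have e1 : IsNilpotent (A - A * A * A) := by rw [← cube]; exact hA3
    have e2 : IsNilpotent (D * (D * DH) - (D * (D * DH)) * (D * (D * DH)) * (D * (D * DH))) := by
      rw [← cube]; exact hDe3
    exact nilp_lower_tri e1 e2
  -- U is nilpotent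
  have hU : IsNilpotent ((1 - (!![A, 0; C, D * (D * DH)] : Matrix (Fin 2) (Fin 2) (X →L[ℂ] X)) ^ 2
      - !![A, 0; C, D * (D * DH)] * !![0, B; 0, D * (1 - D * DH)]
      - (!![0, B; 0, D * (1 - D * DH)]) ^ 2) * !![0, B; 0, D * (1 - D * DH)]) := by
    apply aux_nilp_mul_swap
    rw [aux_nW_eq hNS]
    exact aux_nilp_sub_cube_self hN
  -- conclude
  apply aux_hasHirano_of_nilp
  rw [hM, aux_decomp3 hNS]
  exact aux_nilp_add_of_mul_eq_zero (aux_UT_zero hNS) hT hU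
end

section
/- Let X be a complex Banach space and L(X) the Banach algebra of bounded linear operators on X. Suppose A, D ∈ L(X) have Hirano inverses A^H and D^H. If AB = 0, B D^H = 0 and D^π C B = 0, where D^π = I − D·D^H, then the operator matrix M = [[A, B], [C, D]] has a Hirano inverse in M₂(L(X)). -/
open Polynomial Matrix

lemma commA {S : Type*} [CommRing S] (x : S) (h : IsNilpotent (x - x^3)) :
    HasHiranoInverse x := by
  obtain ⟨n, hn⟩ := h
  have hxm : (x - x^3)^(n+1) = 0 := by rw [pow_succ, hn, zero_mul]
  set m := n + 1 with hm
  set b := x^2 with hb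
  have hw : (b - b^2)^m = 0 := by
    have h5 : b - b^2 = x * (x - x^3) := by rw [hb]; ring
    rw [h5, mul_pow, hxm, mul_zero]
  set c := 1 - (1-b)^m with hc
  have hbc : b ∣ c := by
    have h0 := sub_dvd_pow_sub_pow (1-b) 1 m
    simp only [one_pow] at h0
    have h2 : (1:S) - b - 1 = -b := by ring
    rw [h2] at h0
    have h3 : b ∣ (1-b)^m - 1 := neg_dvd.mp h0
    have h4 := dvd_neg.mpr h3
    rwa [neg_sub] at h4
  obtain ⟨g, hg⟩ := hbc
  have key1 : b^m * c = b^m := by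
    have h5 : b^m * c = b^m - (b*(1-b))^m := by rw [mul_pow]; ring
    rw [h5]
    have h6 : b * (1-b) = b - b^2 := by ring
    rw [h6, hw, sub_zero]
  have key2 : c^m = c^(m+1) := by
    calc c^m = b^m * g^m := by rw [hg, mul_pow]
    _ = (b^m * c) * g^m := by rw [key1]
    _ = c * (b^m * g^m) := by ring
    _ = c * c^m := by rw [hg, mul_pow]
    _ = c^(m+1) := by ring
  have keyk : ∀ k, c^m = c^(m+k) := by
    intro k
    induction k with
    | zero => rfl
    | succ k ih =>
      calc c^m = c^(m+k) := ih
      _ = c^(m+k+1) := by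
          have h7 : c^(m+k) = c^m * c^k := by ring
          have h7' : c^(m+k+1) = c^(m+1) * c^k := by ring
          rw [h7, h7', key2]
  have keybk : ∀ k, b^m * c^k = b^m := by
    intro k
    induction k with
    | zero => simp
    | succ k ih => rw [pow_succ c k, ← mul_assoc, mul_comm (b^m) (c^k), mul_assoc,
        key1, ← mul_comm (b^m) (c^k), ih]
  have hee : c^m * c^m = c^m := by rw [← pow_add]; exact (keyk m).symm
  have hbme : b^m * c^m = b^m := keybk m
  have hidem1e : ((1:S) - c^m) * (1 - c^m) = 1 - c^m := by
    have h9 : ((1:S)-c^m)*(1-c^m) = 1 - c^m - c^m + c^m*c^m := by ring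
    rw [h9, hee]; ring
  have hpow1e : ((1:S) - c^m)^m = 1 - c^m := IsIdempotentElem.pow_succ_eq n hidem1e
  have hpowe : (c^m)^m = c^m := IsIdempotentElem.pow_succ_eq n hee
  have n1 : (b*(1-c^m))^m = 0 := by
    rw [mul_pow, hpow1e, mul_sub, mul_one, hbme, sub_self]
  have n2 : (c^m*(1-b))^m = 0 := by
    have h8 : ((1:S)-b)^m = 1 - c := by rw [hc]; ring
    rw [mul_pow, hpowe, h8, mul_sub, mul_one, ← pow_succ, ← key2, sub_self]
  have hbe : IsNilpotent (b - c^m) := by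
    have hx : b - c^m = b*(1-c^m) - c^m*(1-b) := by ring
    rw [hx]
    exact (Commute.all _ _).isNilpotent_sub ⟨m, n1⟩ ⟨m, n2⟩
  have hu : IsUnit (1 - c^m*(1-b)) := IsNilpotent.isUnit_one_sub ⟨m, n2⟩
  obtain ⟨v, hv⟩ := hu.exists_right_inv
  have heu : c^m * (1 - c^m*(1-b)) = c^m * b := by
    have h9 : c^m * (1 - c^m*(1-b)) = c^m - c^m*c^m*(1-b) := by ring
    rw [h9, hee]; ring
  have hebv : c^m = b * (c^m * v) := by
    calc c^m = c^m * ((1 - c^m*(1-b)) * v) := by rw [hv, mul_one]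
    _ = (c^m * (1 - c^m*(1-b))) * v := by ring
    _ = (c^m * b) * v := by rw [heu]
    _ = b * (c^m * v) := by ring
  have hxz : x * (x*c^m*v) = c^m := by
    calc x * (x*c^m*v) = b * (c^m*v) := by rw [hb]; ring
    _ = c^m := hebv.symm
  refine ⟨x * c^m * v, by ring, ?_, ?_⟩
  · have h9 : (x*c^m*v)*x*(x*c^m*v) = (x*c^m*v) * (x*(x*c^m*v)) := by ring
    rw [h9, hxz]
    have h10 : x*c^m*v*c^m = x*(c^m*c^m)*v := by ring
    rw [h10, hee]
  · have h11 : x^2 - x*(x*c^m*v) = b - c^m := by rw [hxz, hb]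
    rw [h11]
    exact hbe

/-- In any ring, if `a - a^3` is nilpotent then `a` has a Hirano inverse. -/
lemma hirano_of_nilpotent {R : Type*} [Ring R] (a : R) (h : IsNilpotent (a - a^3)) :
    HasHiranoInverse a := by
  obtain ⟨n, hn⟩ := h
  have hm : (a - a^3)^(n+1) = 0 := by rw [pow_succ, hn, zero_mul]
  set I : Ideal (Polynomial ℤ) := Ideal.span {(X - X^3)^(n+1)} with hI
  set S := Polynomial ℤ ⧸ I with hS
  have hf : ∀ p ∈ I, (Polynomial.aeval a).toRingHom p = 0 := by
    intro p hp
    rw [hI, Ideal.mem_span_singleton] at hp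
    obtain ⟨q, rfl⟩ := hp
    simp only [AlgHom.toRingHom_eq_coe, RingHom.coe_coe, _root_.map_mul, _root_.map_pow, _root_.map_sub, aeval_X]
    rw [hm, zero_mul]
  set φ : S →+* R := Ideal.Quotient.lift I (Polynomial.aeval a).toRingHom hf with hφ
  set x : S := Ideal.Quotient.mk I X with hx
  have hφx : φ x = a := by
    rw [hφ, hx, Ideal.Quotient.lift_mk]
    simp
  have hnil : IsNilpotent (x - x^3) := by
    refine ⟨n+1, ?_⟩
    have : (x - x^3)^(n+1) = Ideal.Quotient.mk I ((X - X^3)^(n+1)) := by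
      rw [hx]; push_cast [_root_.map_pow, _root_.map_sub]; rfl
    rw [this, Ideal.Quotient.eq_zero_iff_mem]
    exact Ideal.subset_span rfl
  obtain ⟨z, hzx, hzz, hznil⟩ := commA x hnil
  refine ⟨φ z, ?_, ?_, ?_⟩
  · rw [← hφx, ← _root_.map_mul, ← _root_.map_mul, hzx]
  · rw [← hφx, ← _root_.map_mul, ← _root_.map_mul, ← hzz]
  · rw [← hφx, ← _root_.map_mul, ← _root_.map_pow, ← _root_.map_sub]
    exact hznil.map φ

lemma nilpotent_of_hirano {R : Type*} [Ring R] (a z : R)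
    (hc : a * z = z * a) (hz : z = z * a * z) (hn : IsNilpotent (a^2 - a*z)) :
    IsNilpotent (a - a^3) := by
  obtain ⟨n, hn⟩ := hn
  have hca : Commute a z := hc
  have hae : Commute a (a*z) := (Commute.refl a).mul_right hca
  have haw : Commute a (a^2 - a*z) := ((Commute.refl a).pow_right 2).sub_right hae
  have hew : Commute (a*z) (a^2 - a*z) :=
    (hae.symm.pow_right 2).sub_right (Commute.refl (a*z))
  have hee : (a*z) * (a*z) = a*z := by
    calc a*z*(a*z) = a*(z*a*z) := by noncomm_ring
    _ = a * z := by rw [← hz]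
  have h1e : Commute a (1 - a*z) := (Commute.one_right a).sub_right hae
  have hw1e : Commute (a^2 - a*z) (1 - a*z) :=
    (Commute.one_right _).sub_right hew.symm
  -- x = a*(1 - a*z)
  have hx2 : (a*(1 - a*z))^2 = (a^2 - a*z)*(1 - a*z) := by
    rw [h1e.mul_pow]
    have hq : ((1:R) - a*z)^2 = 1 - a*z := by
      have : ((1:R) - a*z)*(1 - a*z) = 1 - a*z - a*z + (a*z)*(a*z) := by noncomm_ring
      rw [sq, this, hee]; noncomm_ring
    rw [hq]
    have : (a^2 - a*z)*(1 - a*z) = a^2 - a^2*(a*z) - (a*z - (a*z)*(a*z)) := by noncomm_ring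
    rw [this, hee, sub_self, sub_zero, mul_sub, mul_one]
  have nx : IsNilpotent (a*(1 - a*z)) := by
    refine ⟨2*n, ?_⟩
    rw [pow_mul, hx2, hw1e.mul_pow, hn, zero_mul]
  have ny : IsNilpotent (a*(a^2 - a*z)) := ⟨n, by rw [haw.mul_pow, hn, mul_zero]⟩
  have hxy : Commute (a*(1 - a*z)) (a*(a^2 - a*z)) := by
    have c1 : Commute a (a*(a^2 - a*z)) := (Commute.refl a).mul_right haw
    have c2 : Commute (1 - a*z) (a*(a^2 - a*z)) := h1e.symm.mul_right
      ((Commute.one_left _).sub_left hew)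
    exact c1.mul_left c2
  have hsplit : a - a^3 = a*(1 - a*z) - a*(a^2 - a*z) := by noncomm_ring
  rw [hsplit]
  exact hxy.isNilpotent_sub nx ny

lemma tri_nilpotent {R : Type*} [Ring R] (n1 n2 c : R)
    (h1 : IsNilpotent n1) (h2 : IsNilpotent n2) :
    IsNilpotent (!![n1, 0; c, n2] : Matrix (Fin 2) (Fin 2) R) := by
  obtain ⟨p, hp⟩ := h1
  obtain ⟨q, hq⟩ := h2
  have key : ∀ k, ∃ y, (!![n1, 0; c, n2] : Matrix (Fin 2) (Fin 2) R)^k = !![n1^k, 0; y, n2^k] := by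
    intro k
    induction k with
    | zero => exact ⟨0, by rw [pow_zero, Matrix.one_fin_two, pow_zero, pow_zero]⟩
    | succ k ih =>
      obtain ⟨y, hy⟩ := ih
      refine ⟨y * n1 + n2^k * c, ?_⟩
      rw [pow_succ, hy, Matrix.mul_fin_two]
      congr 1 <;> simp [pow_succ]
  obtain ⟨y, hy⟩ := key p
  obtain ⟨y', hy'⟩ := key q
  refine ⟨(p + q) * 2, ?_⟩
  have hpq : (!![n1, 0; c, n2] : Matrix (Fin 2) (Fin 2) R)^(p+q) =
      !![0, 0; y * n1^q + n2^p * y', 0] := by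
    rw [pow_add, hy, hy', hp, hq, Matrix.mul_fin_two]
    congr 1 <;> simp
  rw [pow_mul, hpq]
  rw [pow_two, Matrix.mul_fin_two]
  simp
  ext i j; fin_cases i <;> fin_cases j <;> rfl

lemma add_fin_two' {R : Type*} [Ring R] (a b c d e f g h : R) :
    (!![a,b;c,d] : Matrix (Fin 2) (Fin 2) R) + !![e,f;g,h] = !![a+e, b+f; c+g, d+h] := by
  ext i j; fin_cases i <;> fin_cases j <;> simp

lemma sub_fin_two' {R : Type*} [Ring R] (a b c d e f g h : R) :
    (!![a,b;c,d] : Matrix (Fin 2) (Fin 2) R) - !![e,f;g,h] = !![a-e, b-f; c-g, d-h] := by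
  ext i j; fin_cases i <;> fin_cases j <;> simp

theorem main_ring {R : Type*} [Ring R] (A B C D AH DH : R)
    (hAH : A * AH = AH * A ∧ AH = AH * A * AH ∧ IsNilpotent (A ^ 2 - A * AH))
    (hDH : D * DH = DH * D ∧ DH = DH * D * DH ∧ IsNilpotent (D ^ 2 - D * DH))
    (h1 : A * B = 0)
    (h2 : B * DH = 0)
    (h3 : (1 - D * DH) * C * B = 0) :
    HasHiranoInverse (!![A, B; C, D] : Matrix (Fin 2) (Fin 2) R) := by
  set T : Matrix (Fin 2) (Fin 2) R := !![A, 0; C, D] with hT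
  set Q : Matrix (Fin 2) (Fin 2) R := !![0, B; 0, 0] with hQ
  -- basic scalar facts
  have hBe : B * (D * DH) = 0 := by rw [hDH.1, ← mul_assoc, h2, zero_mul]
  have heD : Commute (D * DH) D := by
    unfold Commute SemiconjBy
    rw [mul_assoc, ← hDH.1, ← mul_assoc]
  have hCB : C * B = (D * DH) * (C * B) := by
    have := h3
    rw [sub_mul, sub_mul, one_mul] at this
    rw [← sub_eq_zero]
    calc C * B - D * DH * (C * B) = C * B - D * DH * C * B := by noncomm_ring
    _ = 0 := this
  have hBDCB : ∀ k, B * (D^k * (C*B)) = 0 := by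
    intro k
    have hcomm := (heD.pow_right k).eq
    calc B * (D^k * (C*B)) = B * (D^k * ((D*DH) * (C*B))) := by rw [← hCB]
    _ = B * ((D^k * (D*DH)) * (C*B)) := by noncomm_ring
    _ = B * (((D*DH) * D^k) * (C*B)) := by rw [← hcomm]
    _ = (B * (D*DH)) * (D^k * (C*B)) := by noncomm_ring
    _ = 0 := by rw [hBe, zero_mul]
  -- powers of T
  have hTpow : ∀ m : ℕ, ∃ σ, T^(m+1) = !![A^(m+1), 0; σ, D^(m+1)] ∧ σ * B = D^m * (C*B) := by
    intro m
    induction m with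
    | zero => exact ⟨C, by rw [pow_one, hT, pow_one, pow_one], by rw [pow_zero, one_mul]⟩
    | succ k ih =>
      obtain ⟨σ, hσ, hσB⟩ := ih
      refine ⟨σ * A + D^(k+1) * C, ?_, ?_⟩
      · rw [pow_succ, hσ, hT, Matrix.mul_fin_two]
        congr 1 <;> simp [pow_succ]
      · rw [add_mul, mul_assoc, h1, mul_zero, zero_add, mul_assoc]
  have hQQ : Q * Q = 0 := by
    rw [hQ, Matrix.mul_fin_two]
    ext i j; fin_cases i <;> fin_cases j <;> simp
  have hQTQ : ∀ m : ℕ, Q * T^m * Q = 0 := by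
    intro m
    match m with
    | 0 => rw [pow_zero, mul_one, hQQ]
    | (k+1) =>
      obtain ⟨σ, hσ, hσB⟩ := hTpow k
      rw [hσ, hQ, Matrix.mul_fin_two, Matrix.mul_fin_two]
      have : B * σ * B = 0 := by rw [mul_assoc, hσB, hBDCB]
      ext i j; fin_cases i <;> fin_cases j <;>
        simp [mul_assoc, hσB, hBDCB]
  -- Q * (polynomial in T) * Q = 0
  have hKL : ∀ p : Polynomial ℤ, Q * (aeval T p) * Q = 0 := by
    intro p
    induction p using Polynomial.induction_on' with
    | add p q hp hq => rw [map_add, mul_add, add_mul, hp, hq, add_zero]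
    | monomial k c =>
      rw [aeval_monomial]
      have hcom := Algebra.commutes (A := Matrix (Fin 2) (Fin 2) R) c Q
      calc Q * (algebraMap ℤ (Matrix (Fin 2) (Fin 2) R) c * T ^ k) * Q
          = (Q * algebraMap ℤ (Matrix (Fin 2) (Fin 2) R) c) * (T^k * Q) := by noncomm_ring
        _ = (algebraMap ℤ (Matrix (Fin 2) (Fin 2) R) c * Q) * (T^k * Q) := by rw [← hcom]
        _ = algebraMap ℤ (Matrix (Fin 2) (Fin 2) R) c * (Q * T^k * Q) := by noncomm_ring
        _ = 0 := by rw [hQTQ, mul_zero]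
  have sand : ∀ (f p f' : Polynomial ℤ) (a a' : ℕ),
      (T^a * Q * aeval T f) * aeval T p * (T^a' * Q * aeval T f') = 0 := by
    intro f p f' a a'
    have haux : aeval T f * aeval T p * T^a' = aeval T (f * p * X^a') := by
      simp [_root_.map_mul, map_pow, aeval_X]
    calc (T^a * Q * aeval T f) * aeval T p * (T^a' * Q * aeval T f')
        = T^a * (Q * (aeval T f * aeval T p * T^a') * Q) * aeval T f' := by noncomm_ring
      _ = T^a * (Q * aeval T (f * p * X^a') * Q) * aeval T f' := by rw [haux]
      _ = 0 := by rw [hKL, mul_zero, zero_mul]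
  set U : Matrix (Fin 2) (Fin 2) R := Q - Q*T^2 - T*Q*T - T^2*Q with hU
  have hUform : U = (T^0 * Q * aeval T ((1 : Polynomial ℤ) - X^2)) + (T^1 * Q * aeval T (-(X : Polynomial ℤ))) +
      (T^2 * Q * aeval T (-(1 : Polynomial ℤ))) := by
    rw [hU]
    simp only [_root_.map_sub, _root_.map_one, _root_.map_pow, aeval_X, _root_.map_neg, pow_zero, pow_one]
    noncomm_ring
  have hUU : ∀ p : Polynomial ℤ, U * aeval T p * U = 0 := by
    intro p
    rw [hUform]
    have E : ∀ (x y z P : Matrix (Fin 2) (Fin 2) R),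
        (x+y+z) * P * (x+y+z) = x*P*x + x*P*y + x*P*z + y*P*x + y*P*y + y*P*z
          + z*P*x + z*P*y + z*P*z := by intros; noncomm_ring
    rw [E, sand, sand, sand, sand, sand, sand, sand, sand, sand]
    simp
  -- S := T - T^3 is nilpotent
  have hAnil : IsNilpotent (A - A^3) := nilpotent_of_hirano A AH hAH.1 hAH.2.1 hAH.2.2
  have hDnil : IsNilpotent (D - D^3) := nilpotent_of_hirano D DH hDH.1 hDH.2.1 hDH.2.2
  obtain ⟨σ3, hσ3, -⟩ := hTpow 2
  have hSmat : T - T^3 = !![A - A^3, 0; C - σ3, D - D^3] := by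
    rw [hσ3, hT, sub_fin_two', sub_zero]
  have hSnil : IsNilpotent (T - T^3) := by
    rw [hSmat]; exact tri_nilpotent _ _ _ hAnil hDnil
  have hUSU : ∀ j : ℕ, U * (T - T^3)^j * U = 0 := by
    intro j
    have hj : (T - T^3)^j = aeval T (((X : Polynomial ℤ) - X^3)^j) := by
      simp [_root_.map_pow, _root_.map_sub, aeval_X]
    rw [hj]; exact hUU _
  -- decomposition of M - M^3
  have hM : (!![A, B; C, D] : Matrix (Fin 2) (Fin 2) R) = T + Q := by
    rw [hT, hQ, add_fin_two', add_zero, zero_add, add_zero, add_zero]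
  have hQTQ1 : Q * T * Q = 0 := by have := hQTQ 1; rwa [pow_one] at this
  have hN : (!![A, B; C, D] : Matrix (Fin 2) (Fin 2) R) - (!![A, B; C, D])^3
      = (T - T^3) + U := by
    rw [hM]
    have E3 : (T+Q) - (T+Q)^3 = ((T - T^3) + (Q - Q*T^2 - T*Q*T - T^2*Q))
        - (T*(Q*Q) + Q*T*Q + (Q*Q)*T + (Q*Q)*Q) := by noncomm_ring
    rw [E3, hQQ, hQTQ1, ← hU]
    simp
  -- power formula
  have hNpow : ∀ k : ℕ, ((T - T^3) + U)^k
      = (T - T^3)^k + ∑ i ∈ Finset.range k, (T - T^3)^i * U * (T - T^3)^(k-1-i) := by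
    intro k
    induction k with
    | zero => simp
    | succ k ih =>
      rw [pow_succ, ih, add_mul, mul_add, mul_add]
      have hVU : (∑ i ∈ Finset.range k, (T - T^3)^i * U * (T - T^3)^(k-1-i)) * U = 0 := by
        rw [Finset.sum_mul]
        refine Finset.sum_eq_zero fun i _ => ?_
        have h : (T - T^3)^i * U * (T - T^3)^(k-1-i) * U
            = (T - T^3)^i * (U * (T - T^3)^(k-1-i) * U) := by noncomm_ring
        rw [h, hUSU, mul_zero]
      have hVS : (∑ i ∈ Finset.range k, (T - T^3)^i * U * (T - T^3)^(k-1-i)) * (T - T^3)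
          = ∑ i ∈ Finset.range k, (T - T^3)^i * U * (T - T^3)^(k-i) := by
        rw [Finset.sum_mul]
        refine Finset.sum_congr rfl fun i hi => ?_
        have hik : k - 1 - i + 1 = k - i := by
          have := Finset.mem_range.mp hi; omega
        rw [mul_assoc, ← pow_succ, hik]
      rw [hVU, hVS, ← pow_succ, Finset.sum_range_succ]
      simp only [Nat.add_sub_cancel, Nat.sub_self, pow_zero, mul_one, add_zero]
      abel
  -- conclude
  obtain ⟨s, hs⟩ := hSnil
  apply hirano_of_nilpotent
  refine ⟨2*s+1, ?_⟩
  rw [hN, hNpow]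
  have hS1 : (T - T^3)^(2*s+1) = 0 := by
    rw [show 2*s+1 = s + (s+1) by omega, pow_add, hs, zero_mul]
  rw [hS1, zero_add]
  refine Finset.sum_eq_zero fun i hi => ?_
  have hi' := Finset.mem_range.mp hi
  by_cases hsi : s ≤ i
  · rw [show i = s + (i - s) by omega, pow_add, hs, zero_mul, zero_mul, zero_mul]
  · rw [show 2*s+1-1-i = s + (s-i) by omega, pow_add, hs, zero_mul, mul_zero]

variable {X : Type*} [NormedAddCommGroup X] [NormedSpace ℂ X] [CompleteSpace X]

theorem hirano_matrix_thm37 (A B C D AH DH : X →L[ℂ] X)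
    (hAH : A * AH = AH * A ∧ AH = AH * A * AH ∧ IsNilpotent (A ^ 2 - A * AH))
    (hDH : D * DH = DH * D ∧ DH = DH * D * DH ∧ IsNilpotent (D ^ 2 - D * DH))
    (h1 : A * B = 0)
    (h2 : B * DH = 0)
    (h3 : (1 - D * DH) * C * B = 0) :
    HasHiranoInverse (!![A, B; C, D] : Matrix (Fin 2) (Fin 2) (X →L[ℂ] X)) :=
  main_ring A B C D AH DH hAH hDH h1 h2 h3
end
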